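/- arXiv:0802.3400 — 4 statements merged into one kernel-verified Lean document; each statement's English description precedes it below -/
import Mathlib

section
/- Let the distinct slope values be Λ_{i_k} = p·Λ̄_k with p ≥ 2 an integer and the Λ̄_k pairwise relatively prime. If slope Λ_{i_k} has multiplicity m_k and ∑_k m_k/Λ_{i_k} = 1, then each m_k is of the form m̄_k·Λ̄_k for some positive integer m̄_k, and ∑_k m̄_k = p. -/
/-- If the distinct slopes are `p * Λ̄ k` with the `Λ̄ k` pairwise coprime, multiplicities
`m k`, and `∑ m k / (p Λ̄ k) = 1`, then `m k = m̄ k * Λ̄ k` with `∑ m̄ k = p`. -/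
theorem stmt2 (ℓ p : ℕ) (hp : 2 ≤ p) (Λ : Fin ℓ → ℕ) (hΛpos : ∀ k, 0 < Λ k)
    (hcop : ∀ k k', k ≠ k' → Nat.Coprime (Λ k) (Λ k'))
    (m : Fin ℓ → ℕ) (hm : ∀ k, 0 < m k)
    (hsum : ∑ k, (m k : ℝ) / ((p : ℝ) * (Λ k : ℝ)) = 1) :
    ∃ mb : Fin ℓ → ℕ, (∀ k, 0 < mb k ∧ m k = mb k * Λ k) ∧ ∑ k, mb k = p := by
  classical
  set P := ∏ j, Λ j with hP
  have hPpos : 0 < P := Finset.prod_pos (fun j _ => hΛpos j)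
  have hppos : 0 < p := by omega
  have hsplit : ∀ k : Fin ℓ, Λ k * ∏ j ∈ Finset.univ.erase k, Λ j = P := fun k =>
    Finset.mul_prod_erase Finset.univ _ (Finset.mem_univ k)
  have key : ∑ k, m k * ∏ j ∈ Finset.univ.erase k, Λ j = p * P := by
    have hr : (∑ k, (m k : ℝ) * ∏ j ∈ Finset.univ.erase k, (Λ j : ℝ)) = (p : ℝ) * P := by
      calc (∑ k, (m k : ℝ) * ∏ j ∈ Finset.univ.erase k, (Λ j : ℝ))
          = ∑ k, ((m k : ℝ) / ((p : ℝ) * Λ k)) * ((p : ℝ) * P) := by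
            refine Finset.sum_congr rfl fun k _ => ?_
            have h1 : (Λ k : ℝ) ≠ 0 := Nat.cast_ne_zero.2 (hΛpos k).ne'
            have h2 : (p : ℝ) ≠ 0 := Nat.cast_ne_zero.2 hppos.ne'
            have h3 : (P : ℝ) = (Λ k : ℝ) * ∏ j ∈ Finset.univ.erase k, (Λ j : ℝ) := by
              rw [← hsplit k]; push_cast; ring
            rw [h3]; field_simp
        _ = (∑ k, (m k : ℝ) / ((p : ℝ) * Λ k)) * ((p : ℝ) * P) := by
            rw [Finset.sum_mul]
        _ = (p : ℝ) * P := by rw [hsum, one_mul]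
    exact_mod_cast hr
  have hdvd : ∀ k, Λ k ∣ m k := by
    intro k
    have hcopr : Nat.Coprime (Λ k) (∏ j ∈ Finset.univ.erase k, Λ j) :=
      Nat.Coprime.prod_right fun j hj =>
        hcop k j (fun h => ((Finset.mem_erase.1 hj).1 h.symm))
    have h3 : Λ k ∣ ∑ j ∈ Finset.univ.erase k, m j * ∏ i ∈ Finset.univ.erase j, Λ i := by
      refine Finset.dvd_sum fun j hj => Dvd.dvd.mul_left ?_ (m j)
      exact Finset.dvd_prod_of_mem Λ
        (Finset.mem_erase.2 ⟨fun h => (Finset.mem_erase.1 hj).1 h.symm, Finset.mem_univ k⟩)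
    have hsum' : (∑ j ∈ Finset.univ.erase k, m j * ∏ i ∈ Finset.univ.erase j, Λ i)
        + m k * ∏ j ∈ Finset.univ.erase k, Λ j = p * P := by
      rw [Finset.sum_erase_add _ _ (Finset.mem_univ k)]; exact key
    have h2 : Λ k ∣ p * P := Dvd.dvd.mul_left (Finset.dvd_prod_of_mem Λ (Finset.mem_univ k)) p
    have h1 : Λ k ∣ m k * ∏ j ∈ Finset.univ.erase k, Λ j := by
      rw [← hsum'] at h2
      exact (Nat.dvd_add_right h3).1 h2
    exact hcopr.dvd_of_dvd_mul_right h1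
  refine ⟨fun k => m k / Λ k, fun k => ⟨Nat.div_pos (Nat.le_of_dvd (hm k) (hdvd k)) (hΛpos k),
      (Nat.div_mul_cancel (hdvd k)).symm⟩, ?_⟩
  have : (∑ k, m k / Λ k) * P = p * P := by
    rw [Finset.sum_mul]
    rw [← key]
    refine Finset.sum_congr rfl fun k _ => ?_
    rw [← hsplit k]
    rw [← mul_assoc, Nat.div_mul_cancel (hdvd k)]
  exact Nat.eq_of_mul_eq_mul_right hPpos this
end

section
/- Let U be a 2×2 unitary matrix with U² = −1 and all entries of modulus 1/√2, and let |e₊⟩ = U|1⟩. Then for every even k, the tensor product vector ψ_k = |1⟩⊗|e₊⟩⊗|1⟩⊗|e₊⟩⊗⋯⊗|1⟩⊗|e₊⟩ ∈ (ℂ²)^{⊗k} is an eigenvector of the quantized map operator U_k defined by U_k(|x₁⟩⊗⋯⊗|x_k⟩) = |x₂⟩⊗⋯⊗|x_k⟩⊗U|x₁⟩ if x₁ = 0, and |x₃⟩⊗⋯⊗|x_k⟩⊗U|x₂⟩⊗U|x₁⟩ if x₁ = 1 (extended linearly). -/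
open scoped Classical in
/-- The product state `|1⟩⊗|e₊⟩⊗⋯⊗|1⟩⊗|e₊⟩` (with `e₊ = U|1⟩`) is an eigenvector of
the quantized map operator `U_k` of the map `T_{\{2,4,4\}}` for every even `k`. -/
theorem stmt16 (k : ℕ) (hk : 2 ≤ k) (hke : Even k)
    (U : Matrix (Fin 2) (Fin 2) ℂ) (hU : U ∈ Matrix.unitaryGroup (Fin 2) ℂ)
    (hU2 : U * U = -1) (hUmod : ∀ i j, ‖U i j‖ = 1 / Real.sqrt 2)
    (ψ : (Fin k → Fin 2) → ℂ)
    (hψ : ∀ x, ψ x = ∏ i : Fin k,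
      if (i : ℕ) % 2 = 0 then (if x i = 1 then (1:ℂ) else 0) else U (x i) 1)
    (M : Matrix (Fin k → Fin 2) (Fin k → Fin 2) ℂ)
    (hM : ∀ y x, M y x =
      if x ⟨0, by omega⟩ = 0 then
        (if ∀ (i : ℕ) (h : i + 1 < k), y ⟨i, by omega⟩ = x ⟨i + 1, h⟩
         then U (y ⟨k - 1, by omega⟩) (x ⟨0, by omega⟩) else 0)
      else
        (if ∀ (i : ℕ) (h : i + 2 < k), y ⟨i, by omega⟩ = x ⟨i + 2, h⟩
         then U (y ⟨k - 2, by omega⟩) (x ⟨1, by omega⟩) *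
              U (y ⟨k - 1, by omega⟩) (x ⟨0, by omega⟩) else 0)) :
    ∃ lam : ℂ, ‖lam‖ = 1 ∧ M.mulVec ψ = lam • ψ := by
  classical
  have hk0 : 0 < k := by omega
  have hk1 : 1 < k := by omega
  have hkpar : k % 2 = 0 := Nat.even_iff.mp hke
  refine ⟨-1, by simp, ?_⟩
  funext y
  set g : Fin 2 → ℕ → ℂ := fun v i =>
    if i % 2 = 0 then (if v = 1 then (1:ℂ) else 0) else U v 1 with hg
  set ext : (Fin k → Fin 2) → ℕ → Fin 2 :=
    fun x i => if h : i < k then x ⟨i, h⟩ else 0 with hext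
  have hpsi : ∀ x : Fin k → Fin 2, ψ x = ∏ i ∈ Finset.range k, g (ext x i) i := by
    intro x
    rw [hψ, ← Fin.prod_univ_eq_prod_range (fun i => g (ext x i) i) k]
    refine Finset.prod_congr rfl fun i _ => ?_
    simp [hg, hext, i.isLt]
  -- the two candidate basis states
  set xb : Fin 2 → (Fin k → Fin 2) := fun b i =>
    if i.val = 0 then 1 else if i.val = 1 then b
    else y ⟨i.val - 2, lt_of_le_of_lt (Nat.sub_le _ _) i.isLt⟩ with hxb
  have hxb0 : ∀ b, xb b ⟨0, hk0⟩ = 1 := fun b => by simp [hxb]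
  have hxb1 : ∀ b, xb b ⟨1, hk1⟩ = b := fun b => by simp [hxb]
  have hxbi : ∀ b (i : ℕ) (h : i + 2 < k), xb b ⟨i + 2, h⟩ = y ⟨i, by omega⟩ := by
    intro b i h
    simp [hxb]
  -- all other summands vanish
  have hzero : ∀ x : Fin k → Fin 2, x ≠ xb 0 → x ≠ xb 1 → M y x * ψ x = 0 := by
    intro x h0 h1
    by_cases hx0 : x ⟨0, hk0⟩ = 1
    · by_cases hsh : ∀ (i : ℕ) (h : i + 2 < k), y ⟨i, by omega⟩ = x ⟨i + 2, h⟩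
      · exfalso
        have hx : x = xb (x ⟨1, hk1⟩) := by
          funext i
          rcases i with ⟨iv, hi⟩
          by_cases e0 : iv = 0
          · subst e0; rw [hxb0]; exact hx0
          by_cases e1 : iv = 1
          · subst e1; rw [hxb1]
          · have h2 : iv - 2 + 2 = iv := by omega
            have hs := hsh (iv - 2) (by omega)
            simp only [hxb, e0, e1, if_false]
            rw [hs]
            congr 1
            exact Fin.ext (by simp [h2])
          -- x ⟨iv,hi⟩ = x ⟨iv-2+2, _⟩ handled via h2; fix below if needed
        have h01 : x ⟨1, hk1⟩ = 0 ∨ x ⟨1, hk1⟩ = 1 := by omega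
        rcases h01 with h | h <;> rw [h] at hx
        · exact h0 hx
        · exact h1 hx
      · have hx0' : ¬ x ⟨0, hk0⟩ = 0 := by rw [hx0]; decide
        rw [hM]
        simp only [hx0', if_false, hsh, if_false, zero_mul]
    · have : ψ x = 0 := by
        rw [hpsi]
        refine Finset.prod_eq_zero (Finset.mem_range.mpr hk0) ?_
        simp [hg, hext, hk0, hx0]
      rw [this, mul_zero]
  have hne : xb 0 ≠ xb 1 := by
    intro h
    have := congrFun h ⟨1, hk1⟩
    rw [hxb1, hxb1] at this
    exact absurd this (by decide)
  -- the partial product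
  set Q : ℂ := ∏ i ∈ Finset.range (k - 2), g (ext y i) i with hQ
  -- value of M at the candidates
  have hMxb : ∀ b, M y (xb b) =
      U (y ⟨k - 2, by omega⟩) b * U (y ⟨k - 1, by omega⟩) 1 := by
    intro b
    rw [hM]
    have hx0' : ¬ xb b ⟨0, by omega⟩ = 0 := by rw [hxb0]; decide
    have hsh : ∀ (i : ℕ) (h : i + 2 < k), y ⟨i, by omega⟩ = xb b ⟨i + 2, h⟩ := by
      intro i h; rw [hxbi]
    rw [if_neg hx0', if_pos hsh, hxb1, hxb0]
  -- value of ψ at the candidates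
  have hpsixb : ∀ b, ψ (xb b) = U b 1 * Q := by
    intro b
    rw [hpsi]
    have hk' : k = 2 + (k - 2) := by omega
    rw [hk', Finset.prod_range_add]
    have h2 : ∏ i ∈ Finset.range 2, g (ext (xb b) i) i = U b 1 := by
      rw [Finset.prod_range_succ, Finset.prod_range_one]
      have e0 : ext (xb b) 0 = 1 := by
        simp only [hext]; rw [dif_pos hk0]; exact hxb0 b
      have e1 : ext (xb b) 1 = b := by
        simp only [hext]; rw [dif_pos hk1]; exact hxb1 b
      rw [e0, e1]; simp [hg]
    have h3 : ∏ i ∈ Finset.range (k - 2), g (ext (xb b) (2 + i)) (2 + i) = Q := by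
      refine Finset.prod_congr rfl fun i hi => ?_
      rw [Finset.mem_range] at hi
      have hik : 2 + i < k := by omega
      have hik' : i < k := by omega
      have e : ext (xb b) (2 + i) = ext y i := by
        simp only [hext]
        rw [dif_pos hik, dif_pos hik']
        have : (⟨2 + i, hik⟩ : Fin k) = ⟨i + 2, by omega⟩ := by
          apply Fin.ext; simp; omega
        rw [this, hxbi]
      have hm : (2 + i) % 2 = i % 2 := by omega
      rw [e]
      simp only [hg, hm]
    rw [h2, h3]
  -- ψ y in terms of Q
  have hpsiy : ψ y = Q * ((if y ⟨k - 2, by omega⟩ = 1 then (1:ℂ) else 0) *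
      U (y ⟨k - 1, by omega⟩) 1) := by
    rw [hpsi]
    conv_lhs => rw [show k = (k - 2) + 2 by omega]
    rw [Finset.prod_range_add]
    congr 1
    rw [Finset.prod_range_succ, Finset.prod_range_one]
    have e0 : ext y (k - 2 + 0) = y ⟨k - 2, by omega⟩ := by
      simp only [hext]; rw [dif_pos (by omega : k - 2 + 0 < k)]
      exact congrArg y (Fin.ext (by show k - 2 + 0 = k - 2; omega))
    have e1 : ext y (k - 2 + 1) = y ⟨k - 1, by omega⟩ := by
      simp only [hext]; rw [dif_pos (by omega : k - 2 + 1 < k)]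
      exact congrArg y (Fin.ext (by show k - 2 + 1 = k - 1; omega))
    have p0 : (k - 2 + 0) % 2 = 0 := by omega
    have p1 : (k - 2 + 1) % 2 = 1 := by omega
    rw [e0, e1]
    simp only [hg, p0, p1]
    norm_num
  -- the key sum over the middle index
  have hUU : U (y ⟨k - 2, by omega⟩) 0 * U 0 1 + U (y ⟨k - 2, by omega⟩) 1 * U 1 1
      = -(if y ⟨k - 2, by omega⟩ = 1 then (1:ℂ) else 0) := by
    have := congrFun (congrFun hU2 (y ⟨k - 2, by omega⟩)) 1
    rw [Matrix.mul_apply, Fin.sum_univ_two] at this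
    rw [this]
    simp [Matrix.one_apply]
  -- compute the matrix-vector product at y
  have hmv : M.mulVec ψ y = M y (xb 0) * ψ (xb 0) + M y (xb 1) * ψ (xb 1) := by
    rw [Matrix.mulVec, dotProduct]
    exact Finset.sum_eq_add_of_mem (xb 0) (xb 1) (Finset.mem_univ _) (Finset.mem_univ _)
      hne (fun c _ hc => hzero c hc.1 hc.2)
  rw [hmv, hMxb, hMxb, hpsixb, hpsixb, Pi.smul_apply, hpsiy, smul_eq_mul]
  have : M.mulVec ψ y = M.mulVec ψ y := rfl
  calc U (y ⟨k - 2, by omega⟩) 0 * U (y ⟨k - 1, by omega⟩) 1 * (U 0 1 * Q)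
        + U (y ⟨k - 2, by omega⟩) 1 * U (y ⟨k - 1, by omega⟩) 1 * (U 1 1 * Q)
      = (U (y ⟨k - 2, by omega⟩) 0 * U 0 1 + U (y ⟨k - 2, by omega⟩) 1 * U 1 1)
          * (U (y ⟨k - 1, by omega⟩) 1 * Q) := by ring
    _ = -(if y ⟨k - 2, by omega⟩ = 1 then (1:ℂ) else 0)
          * (U (y ⟨k - 1, by omega⟩) 1 * Q) := by rw [hUU]
    _ = -1 * (Q * ((if y ⟨k - 2, by omega⟩ = 1 then (1:ℂ) else 0) *
          U (y ⟨k - 1, by omega⟩) 1)) := by ring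
end

section
/- Tower eigenstate construction: let U be a unitary on H with decomposition U = Ū P₀ + Ū₁ Ū P₁, where P₀ + P₁ = 1 are orthogonal projections, Ū, Ū₁ are unitaries, and let P′₁ = Ū P₁ Ū* commute with Ū₁. Define the tower space H̃ = H ⊕ P′₁H and the operator Ũ_θ(φ₀, φ₁) = (Ū₁P′₁φ₁ + ŪP₀φ₀, e^{iθ}ŪP₁φ₀). Then Ũ_θ is unitary on H̃, and if Uψ = e^{iθ}ψ with ‖ψ‖ = 1, then Ψ = (ψ, ŪP₁ψ)/Γ^{1/2} with Γ = 1 + ⟨ψ, P₁ψ⟩ is a normalized eigenvector of Ũ_θ with eigenvalue e^{iθ}. -/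
open scoped InnerProductSpace

set_option maxHeartbeats 1000000 in
/-- Tower eigenstate construction: the tower operator `Ũ_θ` is unitary on the tower
subspace `H̃ = H ⊕ P₁'H`, and `Ψ = (ψ, ŪP₁ψ)/Γ^{1/2}` is a normalized eigenvector of
`Ũ_θ` with eigenvalue `e^{iθ}` whenever `Uψ = e^{iθ}ψ`. -/
theorem stmt17 {H : Type*} [NormedAddCommGroup H] [InnerProductSpace ℂ H]
    [FiniteDimensional ℂ H]
    (P0 P1 Ub Ub1 : H →L[ℂ] H)
    (hP0 : P0 * P0 = P0) (hP0a : ContinuousLinearMap.adjoint P0 = P0)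
    (hP1 : P1 * P1 = P1) (hP1a : ContinuousLinearMap.adjoint P1 = P1)
    (hsum : P0 + P1 = 1)
    (hUb : ContinuousLinearMap.adjoint Ub * Ub = 1 ∧
      Ub * ContinuousLinearMap.adjoint Ub = 1)
    (hUb1 : ContinuousLinearMap.adjoint Ub1 * Ub1 = 1 ∧
      Ub1 * ContinuousLinearMap.adjoint Ub1 = 1)
    (P1' P0' : H →L[ℂ] H)
    (hP1' : P1' = Ub * P1 * ContinuousLinearMap.adjoint Ub)
    (hP0' : P0' = Ub * P0 * ContinuousLinearMap.adjoint Ub)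
    (hcomm1 : Ub1 * P1' = P1' * Ub1) (hcomm0 : Ub1 * P0' = P0' * Ub1)
    (U : H →L[ℂ] H) (hUdef : U = Ub * P0 + Ub1 * Ub * P1)
    (hUunit : ContinuousLinearMap.adjoint U * U = 1 ∧
      U * ContinuousLinearMap.adjoint U = 1)
    (θ : ℝ)
    (Ut : H × H → H × H)
    (hUt : ∀ φ : H × H,
      Ut φ = (Ub1 (P1' φ.2) + Ub (P0 φ.1), Complex.exp (θ * Complex.I) • Ub (P1 φ.1)))
    (S : Set (H × H)) (hS : S = {φ : H × H | P1' φ.2 = φ.2})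
    (ψ : H) (hψn : ‖ψ‖ = 1) (hψ : U ψ = Complex.exp (θ * Complex.I) • ψ)
    (Γ : ℝ) (hΓ : Γ = 1 + (⟪ψ, P1 ψ⟫_ℂ).re)
    (Ψ : H × H) (hΨ : Ψ = (((Real.sqrt Γ)⁻¹ : ℂ) • (ψ, Ub (P1 ψ)) : H × H)) :
    (∀ φ ∈ S, Ut φ ∈ S) ∧
    (∀ φ φ' : H × H, φ ∈ S → φ' ∈ S →
      ⟪(Ut φ).1, (Ut φ').1⟫_ℂ + ⟪(Ut φ).2, (Ut φ').2⟫_ℂ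
        = ⟪φ.1, φ'.1⟫_ℂ + ⟪φ.2, φ'.2⟫_ℂ) ∧
    (∀ φ' ∈ S, ∃ φ ∈ S, Ut φ = φ') ∧
    Ψ ∈ S ∧
    (⟪Ψ.1, Ψ.1⟫_ℂ + ⟪Ψ.2, Ψ.2⟫_ℂ).re = 1 ∧
    Ut Ψ = Complex.exp (θ * Complex.I) • Ψ := by
  obtain ⟨hUbl, hUbr⟩ := hUb
  obtain ⟨hUb1l, hUb1r⟩ := hUb1
  have hP01 : P0 * P1 = 0 := by
    have h : P1 = 1 - P0 := by rw [← hsum]; abel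
    rw [h, mul_sub, mul_one, hP0, sub_self]
  have hP10 : P1 * P0 = 0 := by
    have h : P0 = 1 - P1 := by rw [← hsum]; abel
    rw [h, mul_sub, mul_one, hP1, sub_self]
  have cUb : ∀ A : H →L[ℂ] H, ContinuousLinearMap.adjoint Ub * (Ub * A) = A := fun A => by
    rw [← mul_assoc, hUbl, one_mul]
  have cUb' : ∀ A : H →L[ℂ] H, Ub * (ContinuousLinearMap.adjoint Ub * A) = A := fun A => by
    rw [← mul_assoc, hUbr, one_mul]
  have cUb1' : ∀ A : H →L[ℂ] H, Ub1 * (ContinuousLinearMap.adjoint Ub1 * A) = A := fun A => by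
    rw [← mul_assoc, hUb1r, one_mul]
  have cP0 : ∀ A : H →L[ℂ] H, P0 * (P0 * A) = P0 * A := fun A => by rw [← mul_assoc, hP0]
  have cP1 : ∀ A : H →L[ℂ] H, P1 * (P1 * A) = P1 * A := fun A => by rw [← mul_assoc, hP1]
  have c01 : ∀ A : H →L[ℂ] H, P0 * (P1 * A) = 0 := fun A => by rw [← mul_assoc, hP01, zero_mul]
  have c10 : ∀ A : H →L[ℂ] H, P1 * (P0 * A) = 0 := fun A => by rw [← mul_assoc, hP10, zero_mul]
  -- operator identities
  have h1 : P1' * (Ub * P1) = Ub * P1 := by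
    simp only [hP1', mul_assoc, cUb, cP1, hP1]
  have h2 : P1' * (Ub * P0) = 0 := by
    simp only [hP1', mul_assoc, cUb, c10, hP10, mul_zero]
  have h3 : P1' * P1' = P1' := by
    simp only [hP1', mul_assoc, cUb, cP1, hP1]
  have hP1'a : ContinuousLinearMap.adjoint P1' = P1' := by
    simp only [hP1', ← ContinuousLinearMap.star_eq_adjoint] at hP1a ⊢
    simp [star_mul, hP1a, mul_assoc]
  have h4 : P1' * ContinuousLinearMap.adjoint Ub1 = ContinuousLinearMap.adjoint Ub1 * P1' := by
    have h := congrArg ContinuousLinearMap.adjoint hcomm1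
    simp only [← ContinuousLinearMap.star_eq_adjoint, star_mul] at h
    simp only [ContinuousLinearMap.star_eq_adjoint, hP1'a] at h
    exact h
  have h5 : P0' + P1' = 1 := by
    rw [hP0', hP1', ← add_mul, ← mul_add, hsum, mul_one, hUbr]
  have h6 : P1 * ContinuousLinearMap.adjoint Ub = ContinuousLinearMap.adjoint Ub * P1' := by
    simp only [hP1', mul_assoc, cUb]
  have h7 : P0 * ContinuousLinearMap.adjoint Ub = ContinuousLinearMap.adjoint Ub * P0' := by
    simp only [hP0', mul_assoc, cUb]
  have h10 : P0' * P1' = 0 := by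
    simp only [hP0', hP1', mul_assoc, cUb, c01, hP01, mul_zero]
  have h12 : P1' * P0' = 0 := by
    simp only [hP0', hP1', mul_assoc, cUb, c10, hP10, mul_zero]
  have h11 : P0' * P0' = P0' := by
    simp only [hP0', mul_assoc, cUb, cP0, hP0]
  -- pointwise versions
  have h1p : ∀ x, P1' (Ub (P1 x)) = Ub (P1 x) := fun x => by
    have := DFunLike.congr_fun h1 x; simpa using this
  have h2p : ∀ x, P1' (Ub (P0 x)) = 0 := fun x => by
    have := DFunLike.congr_fun h2 x; simpa using this
  have hc1p : ∀ x, Ub1 (P1' x) = P1' (Ub1 x) := fun x => by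
    have := DFunLike.congr_fun hcomm1 x; simpa using this
  have hsump : ∀ x : H, P0 x + P1 x = x := fun x => by
    have := DFunLike.congr_fun hsum x; simpa using this
  have h5p : ∀ x : H, P0' x + P1' x = x := fun x => by
    have := DFunLike.congr_fun h5 x; simpa using this
  have hUbcp : ∀ x, Ub (ContinuousLinearMap.adjoint Ub x) = x := fun x => by
    have := DFunLike.congr_fun hUbr x; simpa using this
  have hUblp : ∀ x, ContinuousLinearMap.adjoint Ub (Ub x) = x := fun x => by
    have := DFunLike.congr_fun hUbl x; simpa using this
  have hUb1lp : ∀ x, ContinuousLinearMap.adjoint Ub1 (Ub1 x) = x := fun x => by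
    have := DFunLike.congr_fun hUb1l x; simpa using this
  -- inner product lemmas
  have iUb : ∀ x y : H, ⟪Ub x, Ub y⟫_ℂ = ⟪x, y⟫_ℂ := by
    intro x y
    rw [← ContinuousLinearMap.adjoint_inner_right, hUblp]
  have iUb1 : ∀ x y : H, ⟪Ub1 x, Ub1 y⟫_ℂ = ⟪x, y⟫_ℂ := by
    intro x y
    rw [← ContinuousLinearMap.adjoint_inner_right, hUb1lp]
  have iP0 : ∀ x y : H, ⟪P0 x, P0 y⟫_ℂ = ⟪x, P0 y⟫_ℂ := by
    intro x y
    rw [← ContinuousLinearMap.adjoint_inner_right, hP0a]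
    have : P0 (P0 y) = P0 y := by
      have := DFunLike.congr_fun hP0 y; simpa using this
    rw [this]
  have iP1 : ∀ x y : H, ⟪P1 x, P1 y⟫_ℂ = ⟪x, P1 y⟫_ℂ := by
    intro x y
    rw [← ContinuousLinearMap.adjoint_inner_right, hP1a]
    have : P1 (P1 y) = P1 y := by
      have := DFunLike.congr_fun hP1 y; simpa using this
    rw [this]
  have iP1'L : ∀ x y : H, ⟪P1' x, y⟫_ℂ = ⟪x, P1' y⟫_ℂ := by
    intro x y
    conv_lhs => rw [← hP1'a]
    rw [ContinuousLinearMap.adjoint_inner_left]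
  -- scalar facts
  set e : ℂ := Complex.exp (θ * Complex.I) with he
  have hce : (starRingEnd ℂ) e * e = 1 := by
    rw [he, ← Complex.exp_conj, ← Complex.exp_add]
    have : (starRingEnd ℂ) (θ * Complex.I) = -(θ * Complex.I) := by
      simp [Complex.conj_I]
    rw [this, neg_add_cancel, Complex.exp_zero]
  have hee' : e * Complex.exp (-(θ * Complex.I)) = 1 := by
    rw [he, ← Complex.exp_add, add_neg_cancel, Complex.exp_zero]
  -- cross term vanishing
  have cross : ∀ x y : H, P1' x = x → ⟪Ub1 x, Ub (P0 y)⟫_ℂ = 0 := by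
    intro x y hx
    have hx' : Ub1 x = P1' (Ub1 x) := by
      conv_lhs => rw [← hx, hc1p]
    rw [hx', iP1'L, h2p, inner_zero_right]
  refine ⟨?_, ?_, ?_, ?_, ?_, ?_⟩
  · -- invariance of S
    intro φ hφ
    rw [hS] at hφ ⊢
    simp only [Set.mem_setOf_eq] at hφ ⊢
    rw [hUt]
    simp only [map_smul, h1p]
  · -- inner product preservation
    intro φ φ' hφ hφ'
    rw [hS, Set.mem_setOf_eq] at hφ hφ'
    rw [hUt φ, hUt φ']
    simp only [hφ, hφ']
    simp only [inner_add_left, inner_add_right, inner_smul_left, inner_smul_right]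
    rw [cross φ.2 φ'.1 hφ]
    rw [inner_eq_zero_symm.mpr (cross φ'.2 φ.1 hφ')]
    rw [iUb1, iUb, iUb, iP0, iP1]
    have key : ⟪φ.1, P0 φ'.1⟫_ℂ + ⟪φ.1, P1 φ'.1⟫_ℂ = ⟪φ.1, φ'.1⟫_ℂ := by
      rw [← inner_add_right, hsump]
    have hce2 : e * (starRingEnd ℂ) e = 1 := by rw [mul_comm]; exact hce
    rw [← mul_assoc, hce2, one_mul]
    linear_combination key
  · -- surjectivity
    intro φ' hφ'
    rw [hS, Set.mem_setOf_eq] at hφ'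
    have hmem : P1' * (ContinuousLinearMap.adjoint Ub1 * P1') =
        ContinuousLinearMap.adjoint Ub1 * P1' := by
      rw [← mul_assoc, h4, mul_assoc, h3]
    refine ⟨(ContinuousLinearMap.adjoint Ub (P0' φ'.1)
        + Complex.exp (-(θ * Complex.I)) • ContinuousLinearMap.adjoint Ub φ'.2,
        ContinuousLinearMap.adjoint Ub1 (P1' φ'.1)), ?_, ?_⟩
    · rw [hS, Set.mem_setOf_eq]
      have := DFunLike.congr_fun hmem φ'.1
      simpa using this
    · rw [hUt]
      have hA : Ub1 (P1' (ContinuousLinearMap.adjoint Ub1 (P1' φ'.1))) = P1' φ'.1 := by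
        have hop : Ub1 * (P1' * (ContinuousLinearMap.adjoint Ub1 * P1')) = P1' := by
          rw [hmem, cUb1']
        have := DFunLike.congr_fun hop φ'.1
        simpa using this
      have hB1 : Ub (P0 (ContinuousLinearMap.adjoint Ub (P0' φ'.1))) = P0' φ'.1 := by
        have hop : Ub * (P0 * (ContinuousLinearMap.adjoint Ub * P0')) = P0' := by
          rw [← mul_assoc P0, h7, mul_assoc, h11, cUb']
        have := DFunLike.congr_fun hop φ'.1
        simpa using this
      have hP0'2 : P0' φ'.2 = 0 := by
        conv_lhs => rw [← hφ']
        have := DFunLike.congr_fun h10 φ'.2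
        simpa using this
      have hB2 : Ub (P0 (ContinuousLinearMap.adjoint Ub φ'.2)) = 0 := by
        have hop : Ub * (P0 * ContinuousLinearMap.adjoint Ub) = P0' := by
          rw [h7, cUb']
        have := DFunLike.congr_fun hop φ'.2
        simp only [ContinuousLinearMap.mul_apply] at this
        rw [this, hP0'2]
      have hC1 : P1 (ContinuousLinearMap.adjoint Ub (P0' φ'.1)) = 0 := by
        have hop : P1 * (ContinuousLinearMap.adjoint Ub * P0') = 0 := by
          rw [← mul_assoc, h6, mul_assoc, h12, mul_zero]
        have := DFunLike.congr_fun hop φ'.1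
        simpa using this
      have hC2 : Ub (P1 (ContinuousLinearMap.adjoint Ub φ'.2)) = φ'.2 := by
        have h6p : P1 (ContinuousLinearMap.adjoint Ub φ'.2)
            = ContinuousLinearMap.adjoint Ub (P1' φ'.2) := by
          have := DFunLike.congr_fun h6 φ'.2
          simpa using this
        rw [h6p, hφ', hUbcp]
      rw [Prod.ext_iff]
      constructor
      · simp only [map_add, map_smul, hA, hB1, hB2, smul_zero, add_zero]
        rw [add_comm, h5p]
      · simp only [map_add, map_smul, hC1, hC2, map_zero, zero_add, smul_smul, hee', one_smul]
  · -- Ψ ∈ S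
    rw [hS, Set.mem_setOf_eq, hΨ]
    simp only [Prod.smul_snd, map_smul, h1p]
  · -- normalization
    rw [hΨ]
    simp only [Prod.smul_fst, Prod.smul_snd]
    rw [inner_smul_left, inner_smul_right, inner_smul_left, inner_smul_right]
    have hP1ψ : ⟪ψ, P1 ψ⟫_ℂ = ((‖P1 ψ‖ : ℂ)) ^ 2 := by
      rw [← iP1 ψ ψ, inner_self_eq_norm_sq_to_K]
      norm_cast
    have hΓval : Γ = 1 + ‖P1 ψ‖ ^ 2 := by
      rw [hΓ, hP1ψ, ← Complex.ofReal_pow, Complex.ofReal_re]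
    have hΓpos : 0 < Γ := by rw [hΓval]; positivity
    rw [iUb, inner_self_eq_norm_sq_to_K, inner_self_eq_norm_sq_to_K, hψn]
    have hconj : (starRingEnd ℂ) ((Real.sqrt Γ : ℂ))⁻¹ = ((Real.sqrt Γ : ℂ))⁻¹ := by
      rw [map_inv₀, Complex.conj_ofReal]
    rw [hconj]
    push_cast
    have hΓval' : ((Γ:ℝ):ℂ) = 1 + ((‖P1 ψ‖:ℝ):ℂ) ^ 2 := by
      rw [hΓval]; push_cast; ring
    have hsne : (((Real.sqrt Γ : ℝ)) : ℂ) ≠ 0 := by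
      norm_cast
      exact ne_of_gt (Real.sqrt_pos.mpr hΓpos)
    have hs : (((Real.sqrt Γ : ℝ)) : ℂ) * (((Real.sqrt Γ : ℝ)) : ℂ) = (Γ : ℂ) := by
      norm_cast
      exact Real.mul_self_sqrt hΓpos.le
    have hval : (((Real.sqrt Γ : ℝ)) : ℂ)⁻¹ * ((((Real.sqrt Γ : ℝ)) : ℂ)⁻¹ * (1:ℂ) ^ 2) +
        (((Real.sqrt Γ : ℝ)) : ℂ)⁻¹ * ((((Real.sqrt Γ : ℝ)) : ℂ)⁻¹ * ((‖P1 ψ‖:ℝ):ℂ) ^ 2) = 1 := by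
      field_simp
      linear_combination hΓval'.symm - hs
    exact (congrArg Complex.re hval).trans Complex.one_re

  · -- eigenvector
    have hUp : ∀ x, U x = Ub (P0 x) + Ub1 (Ub (P1 x)) := by
      intro x
      rw [hUdef]
      simp [ContinuousLinearMap.add_apply, ContinuousLinearMap.mul_apply]
    rw [hΨ, hUt]
    simp only [Prod.smul_fst, Prod.smul_snd, map_smul, h1p, Prod.smul_mk]
    rw [Prod.ext_iff]
    constructor
    · simp only
      rw [← smul_add, smul_comm]
      congr 1
      rw [← hψ, hUp, add_comm]
    · simp only
end

section
/- Let Ũ be a unitary on H̃ = H₀ ⊕ H₁ and suppose for every pair of basis labels (x,i), (x′,i′), the matrix element satisfies |⟨E_{(x′,i′)}, Ũ^{k−1} E_{(x,i)}⟩| ≤ 2^{−(k−1)/2}, and each projection P̃_y (over words y of length k−1) is the orthogonal projection onto the span of at most 2 basis vectors. Then for all words y, y′ of length k−1, ‖P̃_y Ũ^{k−1} P̃_{y′}‖ ≤ 2·2^{−(k−1)/2}, and hence by the entropic uncertainty principle, any normalized eigenvector Ψ of Ũ satisfies h(Ψ) := −∑_y ‖P̃_yΨ‖² log‖P̃_yΨ‖²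 ≥ ((k−1)/2 − 1)·log 2. -/
open scoped InnerProductSpace ComplexConjugate
open Complex HadamardThreeLines

private lemma aux_norm_sq_sum {H : Type*} [NormedAddCommGroup H]
    [InnerProductSpace ℂ H] {ι : Type*} {v : ι → H} (hv : Orthonormal ℂ v)
    (s : Finset ι) (l : ι → ℂ) :
    ‖∑ b ∈ s, l b • v b‖ ^ 2 = ∑ b ∈ s, ‖l b‖ ^ 2 := by
  rw [@norm_sq_eq_re_inner ℂ, hv.inner_sum l l s, map_sum]
  refine Finset.sum_congr rfl fun b _ => ?_
  rw [← Complex.normSq_eq_conj_mul_self]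
  simp [Complex.normSq_eq_norm_sq, ← Complex.ofReal_pow]

private lemma entropy_aux {W : Type*} [Fintype W] (q : W → ℝ) (ε : ℝ) (hε : 0 < ε)
    (m : W → W → ℂ)
    (hq0 : ∀ y, 0 ≤ q y) (hqsum : ∑ y, q y = 1)
    (hm : ∀ y y', ‖m y y'‖ ≤ ε * Real.sqrt (q y) * Real.sqrt (q y'))
    (hmsum : ∑ y, ∑ y', m y y' = 1)
    (hpair : ∀ a b : W → ℂ, ‖∑ y, ∑ y', a y * b y' * m y y'‖ ≤
      Real.sqrt (∑ y, ‖a y‖^2 * q y) * Real.sqrt (∑ y, ‖b y‖^2 * q y)) :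
    -Real.log ε ≤ -(∑ y, q y * Real.log (q y)) := by
  classical
  obtain ⟨y₀, hy₀⟩ : ∃ y, 0 < q y := by
    by_contra h
    push_neg at h
    have : ∑ y, q y = 0 := Finset.sum_eq_zero fun y _ => le_antisymm (h y) (hq0 y)
    rw [hqsum] at this; norm_num at this
  set A : ℝ → ℝ := fun t => ∑ y, q y * Real.exp (-t * Real.log (q y)) with hA_def
  set Bf : ℝ → ℝ := fun t => ∑ y, q y * Real.exp (-(t/2) * Real.log (q y)) with hB_def
  have hApos : ∀ t, 0 < A t := fun t =>
    Finset.sum_pos' (fun y _ => mul_nonneg (hq0 y) (Real.exp_pos _).le)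
      ⟨y₀, Finset.mem_univ _, mul_pos hy₀ (Real.exp_pos _)⟩
  have hBpos : ∀ t, 0 < Bf t := fun t =>
    Finset.sum_pos' (fun y _ => mul_nonneg (hq0 y) (Real.exp_pos _).le)
      ⟨y₀, Finset.mem_univ _, mul_pos hy₀ (Real.exp_pos _)⟩
  have hA0 : A 0 = 1 := by simp [hA_def, hqsum]
  have hB0 : Bf 0 = 1 := by simp [hB_def, hqsum]
  have key : ∀ θ ∈ Set.Ioo (0:ℝ) 1,
      0 ≤ (1-θ) * Real.log (A θ) + θ * (Real.log ε + 2 * Real.log (Bf θ)) := by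
    intro θ hθ
    set L : W → ℝ := fun y => Real.log (q y) / 2 with hL_def
    set F : ℂ → ℂ := fun z =>
      ∑ y, ∑ y', Complex.exp ((z - (θ:ℂ)) * (L y : ℂ)) *
        Complex.exp ((z - (θ:ℂ)) * (L y' : ℂ)) * m y y' with hF_def
    have habs_coef : ∀ (z : ℂ) (y : W),
        ‖Complex.exp ((z - (θ:ℂ)) * (L y : ℂ))‖ =
          Real.exp ((z.re - θ) * L y) := by
      intro z y
      rw [Complex.norm_exp]
      congr 1
      simp [Complex.mul_re]
    have hFdiff : Differentiable ℂ F := by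
      apply Differentiable.fun_sum; intro y _
      apply Differentiable.fun_sum; intro y' _
      exact ((((differentiable_id.sub_const _).mul_const _).cexp.mul
        (((differentiable_id.sub_const _).mul_const _).cexp)).mul_const _)
    have hFθ : F (θ:ℂ) = 1 := by
      simp [hF_def, hmsum]
    have hedge0 : ∀ z : ℂ, z.re = 0 → ‖F z‖ ≤ A θ := by
      intro z hz
      have h := hpair (fun y => Complex.exp ((z - (θ:ℂ)) * (L y : ℂ)))
        (fun y => Complex.exp ((z - (θ:ℂ)) * (L y : ℂ)))
      have hsum_eq : (∑ y, ‖Complex.exp ((z - (θ:ℂ)) * (L y : ℂ))‖^2 * q y)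
          = A θ := by
        refine Finset.sum_congr rfl fun y _ => ?_
        rw [habs_coef, hz]
        have h2 : (0-θ) * L y + (0-θ) * L y = -θ * Real.log (q y) := by
          simp only [hL_def]; ring
        rw [pow_two, ← Real.exp_add, h2, mul_comm]
      rw [hsum_eq] at h
      calc ‖F z‖ ≤ Real.sqrt (A θ) * Real.sqrt (A θ) := h
        _ = A θ := Real.mul_self_sqrt (hApos θ).le
    have hBsum : ∑ y, Real.sqrt (q y) * Real.exp ((1-θ) * L y) = Bf θ := by
      refine Finset.sum_congr rfl fun y _ => ?_
      rcases eq_or_lt_of_le (hq0 y) with hq | hq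
      · rw [← hq]; simp
      · have hsq : Real.sqrt (q y) = Real.exp (L y) := by
          rw [Real.sqrt_eq_rpow, Real.rpow_def_of_pos hq]
          simp only [hL_def]; ring_nf
        rw [hsq, ← Real.exp_add]
        have h3 : L y + (1-θ) * L y = Real.log (q y) + (-(θ/2) * Real.log (q y)) := by
          simp only [hL_def]; ring
        rw [h3, Real.exp_add, Real.exp_log hq]
    have hedge1 : ∀ z : ℂ, z.re = 1 → ‖F z‖ ≤ ε * (Bf θ)^2 := by
      intro z hz
      have hterm : ∀ y y', ‖Complex.exp ((z - (θ:ℂ)) * (L y : ℂ)) *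
          Complex.exp ((z - (θ:ℂ)) * (L y' : ℂ)) * m y y'‖ ≤
          (Real.sqrt (q y) * Real.exp ((1-θ) * L y)) *
            (Real.sqrt (q y') * Real.exp ((1-θ) * L y')) * ε := by
        intro y y'
        rw [norm_mul, norm_mul, habs_coef, habs_coef, hz]
        calc Real.exp ((1-θ) * L y) * Real.exp ((1-θ) * L y') * ‖m y y'‖
            ≤ Real.exp ((1-θ) * L y) * Real.exp ((1-θ) * L y') *
              (ε * Real.sqrt (q y) * Real.sqrt (q y')) := by
              apply mul_le_mul_of_nonneg_left (hm y y') (by positivity)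
          _ = (Real.sqrt (q y) * Real.exp ((1-θ) * L y)) *
              (Real.sqrt (q y') * Real.exp ((1-θ) * L y')) * ε := by ring
      calc ‖F z‖
          ≤ ∑ y, ∑ y', ‖Complex.exp ((z - (θ:ℂ)) * (L y : ℂ)) *
              Complex.exp ((z - (θ:ℂ)) * (L y' : ℂ)) * m y y'‖ := by
            simpa using
              (norm_sum_le Finset.univ (fun y => ∑ y', Complex.exp ((z - (θ:ℂ)) * (L y : ℂ)) *
                Complex.exp ((z - (θ:ℂ)) * (L y' : ℂ)) * m y y')).trans
              (Finset.sum_le_sum fun y _ => norm_sum_le _ _)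
        _ ≤ ∑ y, ∑ y', (Real.sqrt (q y) * Real.exp ((1-θ) * L y)) *
              (Real.sqrt (q y') * Real.exp ((1-θ) * L y')) * ε := by
            exact Finset.sum_le_sum fun y _ => Finset.sum_le_sum fun y' _ => hterm y y'
        _ = (∑ y, Real.sqrt (q y) * Real.exp ((1-θ) * L y)) *
              (∑ y', Real.sqrt (q y') * Real.exp ((1-θ) * L y')) * ε := by
            simp only [Finset.sum_mul, Finset.mul_sum]
            exact Finset.sum_congr rfl fun y _ => Finset.sum_congr rfl fun y' _ => by ring
        _ = ε * (Bf θ)^2 := by rw [hBsum]; ring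
    have hBdd : BddAbove ((norm ∘ F) '' (verticalClosedStrip 0 1)) := by
      refine ⟨∑ y, ∑ y', Real.exp |L y| * Real.exp |L y'| * ‖m y y'‖, ?_⟩
      rintro x ⟨z, hz, rfl⟩
      simp only [Function.comp_apply]
      have hzre : |z.re - θ| ≤ 1 := by
        simp only [verticalClosedStrip, Set.mem_preimage, Set.mem_Icc] at hz
        rw [abs_le]; constructor <;> [linarith [hθ.2.le]; linarith [hθ.1.le]]
      calc ‖F z‖
          ≤ ∑ y, ∑ y', ‖Complex.exp ((z - (θ:ℂ)) * (L y : ℂ)) *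
              Complex.exp ((z - (θ:ℂ)) * (L y' : ℂ)) * m y y'‖ := by
            simpa using
              (norm_sum_le Finset.univ (fun y => ∑ y', Complex.exp ((z - (θ:ℂ)) * (L y : ℂ)) *
                Complex.exp ((z - (θ:ℂ)) * (L y' : ℂ)) * m y y')).trans
              (Finset.sum_le_sum fun y _ => norm_sum_le _ _)
        _ ≤ ∑ y, ∑ y', Real.exp |L y| * Real.exp |L y'| * ‖m y y'‖ := by
            refine Finset.sum_le_sum fun y _ => Finset.sum_le_sum fun y' _ => ?_
            rw [norm_mul, norm_mul, habs_coef, habs_coef]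
            have hb1 : ∀ w : W, Real.exp ((z.re - θ) * L w) ≤ Real.exp |L w| := by
              intro w
              apply Real.exp_le_exp.mpr
              calc (z.re - θ) * L w ≤ |(z.re - θ) * L w| := le_abs_self _
                _ = |z.re - θ| * |L w| := abs_mul _ _
                _ ≤ 1 * |L w| := mul_le_mul_of_nonneg_right hzre (abs_nonneg _)
                _ = |L w| := one_mul _
            exact mul_le_mul (mul_le_mul (hb1 y) (hb1 y') (Real.exp_pos _).le
              (Real.exp_pos _).le) le_rfl ((norm_nonneg _))
              (by positivity)

    have hzmem : (θ:ℂ) ∈ verticalClosedStrip 0 1 := by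
      simp only [verticalClosedStrip, Set.mem_preimage, Complex.ofReal_re, Set.mem_Icc]
      exact ⟨hθ.1.le, hθ.2.le⟩
    have hH := norm_le_interp_of_mem_verticalClosedStrip₀₁' F hzmem
      hFdiff.diffContOnCl hBdd
      (fun z hz => by
        exact hedge0 z (by simpa using hz))
      (fun z hz => by
        exact hedge1 z (by simpa using hz))
    rw [hFθ, norm_one, Complex.ofReal_re] at hH
    have hlog := Real.log_nonneg hH
    rw [Real.log_mul (ne_of_gt (Real.rpow_pos_of_pos (hApos θ) _))
        (ne_of_gt (Real.rpow_pos_of_pos (mul_pos hε (pow_pos (hBpos θ) 2)) _)),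
      Real.log_rpow (hApos θ),
      Real.log_rpow (mul_pos hε (pow_pos (hBpos θ) 2)),
      Real.log_mul (ne_of_gt hε) (ne_of_gt (pow_pos (hBpos θ) 2)),
      Real.log_pow] at hlog
    push_cast at hlog
    linarith
  -- calculus: differentiate at 0
  have hA' : HasDerivAt A (∑ y, q y * (-Real.log (q y))) 0 := by
    have hterms : ∀ y ∈ Finset.univ, HasDerivAt
        (fun t : ℝ => q y * Real.exp (-t * Real.log (q y)))
        (q y * (-Real.log (q y))) 0 := by
      intro y _
      have h1 : HasDerivAt (fun t : ℝ => -t * Real.log (q y)) (-Real.log (q y)) 0 := by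
        simpa using (hasDerivAt_id (0:ℝ)).neg.mul_const (Real.log (q y))
      have h2 := h1.exp
      simpa using h2.const_mul (q y)
    have := HasDerivAt.fun_sum hterms
    simpa [hA_def] using this
  have hBf' : HasDerivAt Bf (∑ y, q y * (-(Real.log (q y)/2))) 0 := by
    have hterms : ∀ y ∈ Finset.univ, HasDerivAt
        (fun t : ℝ => q y * Real.exp (-(t/2) * Real.log (q y)))
        (q y * (-(Real.log (q y)/2))) 0 := by
      intro y _
      have h1 : HasDerivAt (fun t : ℝ => -(t/2) * Real.log (q y))
          (-(Real.log (q y)/2)) 0 := by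
        have h0 : HasDerivAt (fun t : ℝ => t * (-Real.log (q y)/2))
            (1 * (-Real.log (q y)/2)) 0 := (hasDerivAt_id (0:ℝ)).mul_const _
        have heq : (fun t : ℝ => -(t/2) * Real.log (q y)) =
            fun t : ℝ => t * (-Real.log (q y)/2) := by funext t; ring
        rw [heq]
        convert h0 using 1
        ring
      have h2 := h1.exp
      simpa using h2.const_mul (q y)
    have := HasDerivAt.fun_sum hterms
    simpa [hB_def] using this
  set DA : ℝ := ∑ y, q y * (-Real.log (q y)) with hDA_def
  set g : ℝ → ℝ := fun t => (1-t) * Real.log (A t) +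
    t * (Real.log ε + 2 * Real.log (Bf t)) with hg_def
  have hlogA : HasDerivAt (fun t => Real.log (A t)) (DA / A 0) 0 :=
    hA'.log (ne_of_gt (hApos 0))
  have hlogB : HasDerivAt (fun t => Real.log (Bf t))
      ((∑ y, q y * (-(Real.log (q y)/2))) / Bf 0) 0 :=
    hBf'.log (ne_of_gt (hBpos 0))
  have h1 : HasDerivAt (fun t : ℝ => 1 - t) (-1) 0 := by
    simpa using (hasDerivAt_id (0:ℝ)).const_sub 1
  have hterm1 := h1.fun_mul hlogA
  have hterm2 := (hasDerivAt_id (0:ℝ)).fun_mul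
    ((hasDerivAt_const (0:ℝ) (Real.log ε)).fun_add (hlogB.const_mul 2))
  have hg : HasDerivAt g (DA + Real.log ε) 0 := by
    have := hterm1.fun_add hterm2
    simp only [hA0, hB0, Real.log_one, id_eq] at this
    exact this.congr_deriv (by ring)
  have hg0 : g 0 = 0 := by simp [hg_def, hA0, hB0]
  rw [hasDerivAt_iff_tendsto_slope] at hg
  have hmono : Filter.Tendsto (slope g 0) (nhdsWithin 0 (Set.Ioi 0))
      (nhds (DA + Real.log ε)) :=
    hg.mono_left (nhdsWithin_mono 0 (fun x hx => ne_of_gt hx))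
  have hpos : ∀ᶠ t in nhdsWithin 0 (Set.Ioi 0), 0 ≤ slope g 0 t := by
    filter_upwards [Ioo_mem_nhdsGT_of_mem (Set.mem_Ico.mpr ⟨le_refl (0:ℝ), zero_lt_one⟩)]
      with t ht
    rw [slope_def_field]
    rw [hg0]
    apply div_nonneg _ (by linarith [ht.1] : (0:ℝ) ≤ t - 0)
    simpa using key t ht
  have hfinal : 0 ≤ DA + Real.log ε := ge_of_tendsto hmono hpos
  have hDAeq : DA = -(∑ y, q y * Real.log (q y)) := by
    rw [hDA_def]
    simp [mul_neg]
  linarith [hfinal, hDAeq ▸ hfinal]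
/-- If all matrix elements of `Ũ^{k-1}` are bounded by `2^{-(k-1)/2}` and each `P̃_y`
projects onto the span of at most two basis vectors, then
`‖P̃_y Ũ^{k-1} P̃_{y'}‖ ≤ 2·2^{-(k-1)/2}` and every normalized eigenvector `Ψ` of `Ũ`
satisfies the entropy bound `h(Ψ) ≥ ((k-1)/2 - 1) log 2`. -/
theorem stmt19 {H : Type*} [NormedAddCommGroup H] [InnerProductSpace ℂ H]
    [FiniteDimensional ℂ H]
    {B W : Type*} [Fintype B] [Fintype W] [DecidableEq B]
    (E : OrthonormalBasis B ℂ H)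
    (k : ℕ) (hk : 2 ≤ k)
    (Ut : H →L[ℂ] H)
    (hUt : ContinuousLinearMap.adjoint Ut * Ut = 1 ∧
      Ut * ContinuousLinearMap.adjoint Ut = 1)
    (P : W → (H →L[ℂ] H))
    (hPsum : ∑ y, P y = 1)
    (hPproj : ∀ y, ∃ s : Finset B, s.card ≤ 2 ∧
      ∀ φ, (P y) φ = ∑ b ∈ s, ⟪E b, φ⟫_ℂ • E b)
    (hmat : ∀ b b' : B, ‖⟪E b', (Ut ^ (k - 1)) (E b)⟫_ℂ‖ ≤
      (2 : ℝ) ^ (-(((k : ℝ) - 1) / 2))) :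
    (∀ y y' : W, ‖P y * Ut ^ (k - 1) * P y'‖ ≤ 2 * (2 : ℝ) ^ (-(((k : ℝ) - 1) / 2))) ∧
    ∀ (Ψ : H) (c : ℂ), ‖Ψ‖ = 1 → Ut Ψ = c • Ψ →
      (((k : ℝ) - 1) / 2 - 1) * Real.log 2 ≤
        -(∑ y, ‖P y Ψ‖ ^ 2 * Real.log (‖P y Ψ‖ ^ 2)) := by
  classical
  set ε : ℝ := (2:ℝ) ^ (-(((k:ℝ)-1)/2)) with hε_def
  have hε_pos : 0 < ε := Real.rpow_pos_of_pos two_pos _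
  choose s hscard hP using hPproj
  set T : H →L[ℂ] H := Ut ^ (k-1) with hT_def
  have part1 : ∀ y y' : W, ‖P y * T * P y'‖ ≤ 2 * ε := by
    intro y y'
    refine ContinuousLinearMap.opNorm_le_bound _ (by positivity) fun φ => ?_
    have hφexp : (P y * T * P y') φ = P y (T (P y' φ)) := rfl
    rw [hφexp, hP y]
    have hnorm2 : ‖∑ b ∈ s y, ⟪E b, T (P y' φ)⟫_ℂ • E b‖^2
        = ∑ b ∈ s y, ‖⟪E b, T (P y' φ)⟫_ℂ‖^2 :=
      aux_norm_sq_sum E.orthonormal _ _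
    have hcs : ∑ b ∈ s y', ‖⟪E b, φ⟫_ℂ‖ ≤ Real.sqrt 2 * ‖φ‖ := by
      have h1 : (∑ b ∈ s y', ‖⟪E b, φ⟫_ℂ‖)^2 ≤ (s y').card * ∑ b ∈ s y', ‖⟪E b, φ⟫_ℂ‖^2 :=
        sq_sum_le_card_mul_sum_sq
      have h2 : ∑ b ∈ s y', ‖⟪E b, φ⟫_ℂ‖^2 ≤ ‖φ‖^2 :=
        E.orthonormal.sum_inner_products_le φ
      have h3 : (∑ b ∈ s y', ‖⟪E b, φ⟫_ℂ‖)^2 ≤ 2 * ‖φ‖^2 := by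
        calc (∑ b ∈ s y', ‖⟪E b, φ⟫_ℂ‖)^2 ≤ (s y').card * ∑ b ∈ s y', ‖⟪E b, φ⟫_ℂ‖^2 := h1
          _ ≤ 2 * ‖φ‖^2 := by
              apply mul_le_mul (by exact_mod_cast hscard y') h2 (by positivity) (by norm_num)
      calc ∑ b ∈ s y', ‖⟪E b, φ⟫_ℂ‖ = Real.sqrt ((∑ b ∈ s y', ‖⟪E b, φ⟫_ℂ‖)^2) := by
            rw [Real.sqrt_sq (by positivity)]
        _ ≤ Real.sqrt (2 * ‖φ‖^2) := Real.sqrt_le_sqrt h3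
        _ = Real.sqrt 2 * ‖φ‖ := by
            rw [Real.sqrt_mul (by norm_num), Real.sqrt_sq (norm_nonneg _)]
    have hcoef : ∀ b' : B, ‖⟪E b', T (P y' φ)⟫_ℂ‖ ≤ ε * (Real.sqrt 2 * ‖φ‖) := by
      intro b'
      have hexp : T (P y' φ) = ∑ b ∈ s y', ⟪E b, φ⟫_ℂ • T (E b) := by
        rw [hP y', map_sum]; simp
      rw [hexp, inner_sum]
      simp_rw [inner_smul_right]
      calc ‖∑ b ∈ s y', ⟪E b, φ⟫_ℂ * ⟪E b', T (E b)⟫_ℂ‖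
          ≤ ∑ b ∈ s y', ‖⟪E b, φ⟫_ℂ * ⟪E b', T (E b)⟫_ℂ‖ := norm_sum_le _ _
        _ ≤ ∑ b ∈ s y', ‖⟪E b, φ⟫_ℂ‖ * ε := by
            refine Finset.sum_le_sum fun b _ => ?_
            rw [norm_mul]
            exact mul_le_mul_of_nonneg_left (by simpa using hmat b b')
              (norm_nonneg _)
        _ = (∑ b ∈ s y', ‖⟪E b, φ⟫_ℂ‖) * ε := by rw [Finset.sum_mul]
        _ ≤ (Real.sqrt 2 * ‖φ‖) * ε := mul_le_mul_of_nonneg_right hcs hε_pos.le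
        _ = ε * (Real.sqrt 2 * ‖φ‖) := by ring
    have hfin : ‖∑ b ∈ s y, ⟪E b, T (P y' φ)⟫_ℂ • E b‖^2 ≤ (2 * ε * ‖φ‖)^2 := by
      rw [hnorm2]
      calc ∑ b ∈ s y, ‖⟪E b, T (P y' φ)⟫_ℂ‖^2
          ≤ ∑ _b ∈ s y, (ε * (Real.sqrt 2 * ‖φ‖))^2 := by
            refine Finset.sum_le_sum fun b _ => ?_
            exact pow_le_pow_left₀ (norm_nonneg _) (hcoef b) 2
        _ = (s y).card * (ε * (Real.sqrt 2 * ‖φ‖))^2 := by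
            rw [Finset.sum_const, nsmul_eq_mul]
        _ ≤ 2 * (ε * (Real.sqrt 2 * ‖φ‖))^2 := by
            apply mul_le_mul_of_nonneg_right (by exact_mod_cast hscard y) (by positivity)
        _ = (2 * ε * ‖φ‖)^2 := by
            rw [mul_pow, mul_pow, Real.sq_sqrt (by norm_num)]; ring
    calc ‖∑ b ∈ s y, ⟪E b, T (P y' φ)⟫_ℂ • E b‖
        = Real.sqrt (‖∑ b ∈ s y, ⟪E b, T (P y' φ)⟫_ℂ • E b‖^2) := by
          rw [Real.sqrt_sq (norm_nonneg _)]
      _ ≤ Real.sqrt ((2 * ε * ‖φ‖)^2) := Real.sqrt_le_sqrt hfin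
      _ = 2 * ε * ‖φ‖ := Real.sqrt_sq (by positivity)
  refine ⟨part1, ?_⟩
  intro Ψ c hΨ hc
  -- projection properties
  have hidem : ∀ y (φ : H), P y (P y φ) = P y φ := by
    intro y φ
    conv_lhs => rw [hP y]
    conv_rhs => rw [hP y]
    refine Finset.sum_congr rfl fun b hb => ?_
    rw [hP y φ, E.orthonormal.inner_right_sum _ hb]
  have hsadj : ∀ y (φ ψ : H), ⟪P y φ, ψ⟫_ℂ = ⟪φ, P y ψ⟫_ℂ := by
    intro y φ ψ
    rw [hP y φ, hP y ψ, sum_inner, inner_sum]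
    refine Finset.sum_congr rfl fun b _ => ?_
    rw [inner_smul_left, inner_smul_right, ← inner_conj_symm φ (E b)]
    ring
  have hnsq : ∀ x : H, ‖x‖^2 = (⟪x, x⟫_ℂ).re := fun x => by
    rw [@norm_sq_eq_re_inner ℂ]; rfl
  have happly : ∀ φ : H, ∑ y, P y φ = φ := by
    intro φ
    have h := congrArg (fun (S : H →L[ℂ] H) => S φ) hPsum
    simpa using h
  have hinner_self : ∀ y (φ : H), ⟪φ, P y φ⟫_ℂ = ((‖P y φ‖:ℝ):ℂ)^2 := by
    intro y φ
    calc ⟪φ, P y φ⟫_ℂ = ⟪φ, P y (P y φ)⟫_ℂ := by rw [hidem]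
      _ = ⟪P y φ, P y φ⟫_ℂ := (hsadj y φ (P y φ)).symm
      _ = ((‖P y φ‖:ℝ):ℂ)^2 := inner_self_eq_norm_sq_to_K (P y φ)
  have hpyth : ∀ φ : H, ∑ y, ‖P y φ‖^2 = ‖φ‖^2 := by
    intro φ
    have h1 : ⟪φ, ∑ y, P y φ⟫_ℂ = ∑ y, ((‖P y φ‖:ℝ):ℂ)^2 := by
      rw [inner_sum]
      exact Finset.sum_congr rfl fun y _ => hinner_self y φ
    rw [happly] at h1
    have h2 := congrArg Complex.re h1
    rw [Complex.re_sum] at h2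
    rw [hnsq φ, h2]
    refine Finset.sum_congr rfl fun y _ => ?_
    rw [← Complex.ofReal_pow, Complex.ofReal_re]
  have horthzero : ∀ y y', y ≠ y' → ∀ ψ : H, P y (P y' ψ) = 0 := by
    intro y y' hne ψ
    have h := hpyth (P y' ψ)
    have hy'term : ‖P y' (P y' ψ)‖^2 = ‖P y' ψ‖^2 := by rw [hidem]
    have hsub : ‖P y (P y' ψ)‖^2 + ‖P y' (P y' ψ)‖^2 ≤ ∑ z, ‖P z (P y' ψ)‖^2 := by
      have hss := Finset.sum_le_sum_of_subset_of_nonneg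
        (Finset.subset_univ ({y, y'} : Finset W)) (fun i _ _ => sq_nonneg ‖P i (P y' ψ)‖)
      rwa [Finset.sum_pair hne] at hss
    have hz : ‖P y (P y' ψ)‖^2 ≤ 0 := by rw [h] at hsub; nlinarith
    have : ‖P y (P y' ψ)‖ = 0 := by nlinarith [norm_nonneg (P y (P y' ψ)), sq_nonneg ‖P y (P y' ψ)‖]
    exact norm_eq_zero.mp this
  have hvv0 : ∀ y y', y ≠ y' → ⟪P y Ψ, P y' Ψ⟫_ℂ = 0 := by
    intro y y' hne
    rw [hsadj, horthzero y y' hne, inner_zero_right]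
  -- unitarity facts
  have hUiso : ∀ φ : H, ‖Ut φ‖ = ‖φ‖ := by
    intro φ
    have h := congrArg (fun (S : H →L[ℂ] H) => ⟪φ, S φ⟫_ℂ) hUt.1
    simp only [ContinuousLinearMap.mul_apply, ContinuousLinearMap.one_apply] at h
    rw [ContinuousLinearMap.adjoint_inner_right] at h
    have h2 := congrArg Complex.re h
    rw [← hnsq, ← hnsq] at h2
    calc ‖Ut φ‖ = Real.sqrt (‖Ut φ‖^2) := (Real.sqrt_sq (norm_nonneg _)).symm
      _ = Real.sqrt (‖φ‖^2) := by rw [h2]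
      _ = ‖φ‖ := Real.sqrt_sq (norm_nonneg _)
  have hTiso : ∀ (n:ℕ) (φ:H), ‖(Ut^n) φ‖ = ‖φ‖ := by
    intro n
    induction n with
    | zero => intro φ; simp
    | succ n ih =>
      intro φ
      rw [pow_succ]
      simp only [ContinuousLinearMap.mul_apply]
      rw [ih, hUiso]
  have hTeig : ∀ n:ℕ, (Ut^n) Ψ = c^n • Ψ := by
    intro n
    induction n with
    | zero => simp
    | succ n ih =>
      have h1 : Ut^(n+1) = Ut * Ut^n := pow_succ' Ut n
      rw [h1, ContinuousLinearMap.mul_apply, ih, map_smul, hc, smul_smul,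
        show c^n * c = c^(n+1) from (pow_succ c n).symm]
  have habsc : ‖c‖ = 1 := by
    have h1 := hUiso Ψ
    rw [hc, norm_smul, hΨ] at h1
    simpa using h1
  set c' : ℂ := c^(k-1) with hc'_def
  have habsc' : ‖c'‖ = 1 := by
    rw [hc'_def, norm_pow, habsc, one_pow]
  have hc'0 : c' ≠ 0 := by
    intro h0
    rw [h0] at habsc'
    simp at habsc'
  have hTΨ : T Ψ = c' • Ψ := hTeig (k-1)
  set q : W → ℝ := fun y => ‖P y Ψ‖^2 with hq_def
  set m : W → W → ℂ := fun y y' => c'⁻¹ * ⟪P y Ψ, T (P y' Ψ)⟫_ℂ with hm_def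
  have hq0 : ∀ y, 0 ≤ q y := fun y => sq_nonneg _
  have hqsum : ∑ y, q y = 1 := by
    rw [hq_def]
    simp only
    rw [hpyth Ψ, hΨ, one_pow]
  have habsinv : ‖c'⁻¹‖ = 1 := by
    rw [norm_inv, habsc', inv_one]
  have hm_bound : ∀ y y', ‖m y y'‖ ≤
      (2*ε) * Real.sqrt (q y) * Real.sqrt (q y') := by
    intro y y'
    have hinner_eq : ⟪P y Ψ, T (P y' Ψ)⟫_ℂ = ⟪P y Ψ, (P y * T * P y') (P y' Ψ)⟫_ℂ := by
      have hmulapp : (P y * T * P y') (P y' Ψ) = P y (T (P y' (P y' Ψ))) := rfl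
      rw [hmulapp, hidem y']
      have := hsadj y (P y Ψ) (T (P y' Ψ))
      rw [hidem y] at this
      exact this
    rw [hm_def]
    simp only
    rw [norm_mul, habsinv, one_mul, hinner_eq]
    calc ‖⟪P y Ψ, (P y * T * P y') (P y' Ψ)⟫_ℂ‖
        = ‖⟪P y Ψ, (P y * T * P y') (P y' Ψ)⟫_ℂ‖ := rfl
      _ ≤ ‖P y Ψ‖ * ‖(P y * T * P y') (P y' Ψ)‖ := norm_inner_le_norm _ _
      _ ≤ ‖P y Ψ‖ * (‖P y * T * P y'‖ * ‖P y' Ψ‖) :=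
          mul_le_mul_of_nonneg_left (ContinuousLinearMap.le_opNorm _ _) (norm_nonneg _)
      _ ≤ ‖P y Ψ‖ * ((2*ε) * ‖P y' Ψ‖) := by
          apply mul_le_mul_of_nonneg_left _ (norm_nonneg _)
          exact mul_le_mul_of_nonneg_right (part1 y y') (norm_nonneg _)
      _ = (2*ε) * Real.sqrt (q y) * Real.sqrt (q y') := by
          rw [hq_def]
          simp only
          rw [Real.sqrt_sq (norm_nonneg _), Real.sqrt_sq (norm_nonneg _)]
          ring
  have hΨinner : ⟪Ψ, Ψ⟫_ℂ = 1 := by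
    rw [inner_self_eq_norm_sq_to_K, hΨ]
    norm_num
  have hdouble : ∀ a b : W → ℂ, ∑ y, ∑ y', a y * b y' * ⟪P y Ψ, T (P y' Ψ)⟫_ℂ =
      ⟪∑ y, (starRingEnd ℂ) (a y) • P y Ψ, T (∑ y', b y' • P y' Ψ)⟫_ℂ := by
    intro a b
    rw [sum_inner]
    refine Finset.sum_congr rfl fun y _ => ?_
    rw [inner_smul_left, Complex.conj_conj, map_sum, inner_sum, Finset.mul_sum]
    refine Finset.sum_congr rfl fun y' _ => ?_
    rw [map_smul, inner_smul_right]
    ring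
  have hmsum : ∑ y, ∑ y', m y y' = 1 := by
    have h := hdouble (fun _ => 1) (fun _ => 1)
    simp only [one_mul, map_one, one_smul, happly] at h
    calc ∑ y, ∑ y', m y y'
        = c'⁻¹ * ∑ y, ∑ y', ⟪P y Ψ, T (P y' Ψ)⟫_ℂ := by
          rw [Finset.mul_sum]
          refine Finset.sum_congr rfl fun y _ => ?_
          rw [Finset.mul_sum]
      _ = c'⁻¹ * ⟪Ψ, T Ψ⟫_ℂ := by rw [h]
      _ = c'⁻¹ * c' := by rw [hTΨ, inner_smul_right, hΨinner, mul_one]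
      _ = 1 := inv_mul_cancel₀ hc'0
  have haux : ∀ a : W → ℂ, ‖∑ y, a y • P y Ψ‖^2 = ∑ y, ‖a y‖^2 * q y := by
    intro a
    have hterm : ∀ y : W, ⟪a y • P y Ψ, ∑ y', a y' • P y' Ψ⟫_ℂ =
        ((‖a y‖^2 * q y : ℝ) : ℂ) := by
      intro y
      rw [inner_sum]
      rw [Finset.sum_eq_single y]
      · rw [inner_smul_left, inner_smul_right, inner_self_eq_norm_sq_to_K, ← mul_assoc,
          ← Complex.normSq_eq_conj_mul_self, Complex.normSq_eq_norm_sq]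
        simp only [hq_def]
        push_cast
        exact rfl
      · intro y' _ hne
        rw [inner_smul_left, inner_smul_right, hvv0 y y' (Ne.symm hne)]
        ring
      · intro hy; exact absurd (Finset.mem_univ y) hy
    calc ‖∑ y, a y • P y Ψ‖^2 = (⟪∑ y, a y • P y Ψ, ∑ y, a y • P y Ψ⟫_ℂ).re := hnsq _
      _ = (∑ y, ⟪a y • P y Ψ, ∑ y', a y' • P y' Ψ⟫_ℂ).re := by rw [sum_inner]
      _ = ∑ y, ‖a y‖^2 * q y := by
          rw [Complex.re_sum]
          refine Finset.sum_congr rfl fun y _ => ?_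
          rw [hterm y, Complex.ofReal_re]
  have hTiso' : ∀ φ : H, ‖T φ‖ = ‖φ‖ := fun φ => hTiso (k-1) φ
  have hpair : ∀ a b : W → ℂ, ‖∑ y, ∑ y', a y * b y' * m y y'‖ ≤
      Real.sqrt (∑ y, ‖a y‖^2 * q y) *
        Real.sqrt (∑ y, ‖b y‖^2 * q y) := by
    intro a b
    have hfac : ∑ y, ∑ y', a y * b y' * m y y' =
        c'⁻¹ * ∑ y, ∑ y', a y * b y' * ⟪P y Ψ, T (P y' Ψ)⟫_ℂ := by
      rw [Finset.mul_sum]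
      refine Finset.sum_congr rfl fun y _ => ?_
      rw [Finset.mul_sum]
      refine Finset.sum_congr rfl fun y' _ => ?_
      rw [hm_def]
      ring
    rw [hfac, hdouble a b, norm_mul, habsinv, one_mul]
    have hu : ‖∑ y, (starRingEnd ℂ) (a y) • P y Ψ‖ =
        Real.sqrt (∑ y, ‖a y‖^2 * q y) := by
      rw [show ‖∑ y, (starRingEnd ℂ) (a y) • P y Ψ‖ =
        Real.sqrt (‖∑ y, (starRingEnd ℂ) (a y) • P y Ψ‖^2) from
          (Real.sqrt_sq (norm_nonneg _)).symm, haux]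
      congr 1
      refine Finset.sum_congr rfl fun y _ => ?_
      rw [Complex.norm_conj]
    have hw : ‖∑ y, b y • P y Ψ‖ = Real.sqrt (∑ y, ‖b y‖^2 * q y) := by
      rw [show ‖∑ y, b y • P y Ψ‖ = Real.sqrt (‖∑ y, b y • P y Ψ‖^2) from
          (Real.sqrt_sq (norm_nonneg _)).symm, haux]
    calc ‖⟪∑ y, (starRingEnd ℂ) (a y) • P y Ψ, T (∑ y', b y' • P y' Ψ)⟫_ℂ‖
        = ‖⟪∑ y, (starRingEnd ℂ) (a y) • P y Ψ, T (∑ y', b y' • P y' Ψ)⟫_ℂ‖ :=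
          rfl
      _ ≤ ‖∑ y, (starRingEnd ℂ) (a y) • P y Ψ‖ * ‖T (∑ y', b y' • P y' Ψ)‖ :=
          norm_inner_le_norm _ _
      _ = ‖∑ y, (starRingEnd ℂ) (a y) • P y Ψ‖ * ‖∑ y', b y' • P y' Ψ‖ := by
          rw [hTiso']
      _ = Real.sqrt (∑ y, ‖a y‖^2 * q y) *
            Real.sqrt (∑ y, ‖b y‖^2 * q y) := by rw [hu, hw]
  have hkey := entropy_aux q (2*ε) (by positivity) m hq0 hqsum hm_bound hmsum hpair
  have hlogε : Real.log (2*ε) = Real.log 2 + (-(((k:ℝ)-1)/2)) * Real.log 2 := by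
    rw [Real.log_mul two_ne_zero (ne_of_gt hε_pos), hε_def, Real.log_rpow two_pos]
  have hfinal : (((k:ℝ)-1)/2 - 1) * Real.log 2 ≤ -(∑ y, q y * Real.log (q y)) := by
    calc (((k:ℝ)-1)/2 - 1) * Real.log 2 = -Real.log (2*ε) := by rw [hlogε]; ring
      _ ≤ _ := hkey
  simpa [hq_def] using hfinal
end
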